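/- Let U be concave and let C, C' : ℝ^l₊ → ℝ be differentiable with C concave, and suppose ∇C(R) = p*. Then the feasible trade set of C at reserves R, {Δ' ≥ 0 : C(R + Δ - Δ') ≥ C(R)}, restricted to trades staying in [0,R]^l componentwise, is contained in the budget set {Δ' ≥ 0 : p*·Δ' ≤ p*·Δ}. Consequently the maximal utility achievable trading against C is at most the maximal utility on the linear budget set: U(ζ(Δ,R,C)) ≤ U(ζ(Δ,p*)). -/

import Mathlib

open Matrix

lemma concave_grad_bound (l : ℕ) (C : (Fin l → ℝ) → ℝ)
    (hCconc : ConcaveOn ℝ Set.univ C) (hCdiff : Differentiable ℝ C)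
    (R v : Fin l → ℝ) : C (R + v) ≤ C R + fderiv ℝ C R v := by
  set g : ℝ → ℝ := fun t => C (R + t • v) with hg
  have hgc : ConcaveOn ℝ Set.univ g := by
    have := hCconc.comp_affineMap (AffineMap.lineMap R (R + v) : ℝ →ᵃ[ℝ] (Fin l → ℝ))
    have heq : (C ∘ (AffineMap.lineMap R (R + v) : ℝ →ᵃ[ℝ] (Fin l → ℝ))) = g := by
      funext t
      simp [g, AffineMap.lineMap_apply, add_comm]
    rw [heq] at this
    simpa using this
  have hcurve : HasDerivAt (fun t : ℝ => R + t • v) v 0 := by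
    simpa using ((hasDerivAt_id (0:ℝ)).smul_const v).const_add R
  have hgd : HasDerivAt g (fderiv ℝ C R v) 0 := by
    have := (hCdiff (R + (0:ℝ) • v)).hasFDerivAt.comp_hasDerivAt 0 hcurve
    simp only [zero_smul, add_zero] at this
    exact this
  have hslope := hgc.slope_le_of_hasDerivAt (Set.mem_univ 0) (Set.mem_univ 1)
    zero_lt_one hgd
  have : g 1 - g 0 ≤ fderiv ℝ C R v := by simpa [slope] using hslope
  have hg0 : g 0 = C R := by simp [g]
  have hg1 : g 1 = C (R + v) := by simp [g]
  linarith [this, hg0 ▸ hg1 ▸ this]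

/-- Budget-set containment for concave CFMM invariants: if `C` is concave and
differentiable with marginal price `∇C(R) = p*`, then every nonnegative final
bundle `Δ'` feasible against the CFMM (with the net trade staying in `[0,R]`
componentwise) satisfies the linear budget constraint `p*·Δ' ≤ p*·Δ`; hence
the CFMM trade utility is bounded by the Walrasian utility `U(ζ(Δ,p*))`. -/
theorem cfmm_feasible_subset_budget (l : ℕ) (C U : (Fin l → ℝ) → ℝ)
    (hCconc : ConcaveOn ℝ Set.univ C) (hCdiff : Differentiable ℝ C)
    (p R Δ : Fin l → ℝ)
    (hgrad : ∀ v, fderiv ℝ C R v = p ⬝ᵥ v)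
    (ζW : Fin l → ℝ)
    (hζW : ∀ x : Fin l → ℝ, (∀ i, 0 ≤ x i) → p ⬝ᵥ x ≤ p ⬝ᵥ Δ → U x ≤ U ζW) :
    ∀ Δ' : Fin l → ℝ, (∀ i, 0 ≤ Δ' i) →
      (∀ i, 0 ≤ Δ i - Δ' i + R i ∧ Δ i - Δ' i + R i ≤ 2 * R i) →
      C (R + Δ - Δ') ≥ C R →
      p ⬝ᵥ Δ' ≤ p ⬝ᵥ Δ ∧ U Δ' ≤ U ζW := by
  intro Δ' hΔ'nn _ hfeas
  have key : C (R + (Δ - Δ')) ≤ C R + fderiv ℝ C R (Δ - Δ') :=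
    concave_grad_bound l C hCconc hCdiff R (Δ - Δ')
  have heq : R + (Δ - Δ') = R + Δ - Δ' := by funext i; simp; ring
  rw [heq, hgrad] at key
  have hsub : p ⬝ᵥ (Δ - Δ') = p ⬝ᵥ Δ - p ⬝ᵥ Δ' := dotProduct_sub p Δ Δ'
  have hb : p ⬝ᵥ Δ' ≤ p ⬝ᵥ Δ := by
    have := hfeas
    rw [ge_iff_le] at this
    nlinarith [key, this, hsub]
  exact ⟨hb, hζW Δ' hΔ'nn hb⟩
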